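/- Let n be a positive integer, E_n = n²/4, and c₊, c₋ real numbers with c := c₊c₋ < 0. For every real δ with n²δ² ≤ -c, the eigenvalues of P_n(δ) are the complex conjugate pair λ^{(±)}(δ) = E_n + δ² ± i√(-c - n²δ²), and each eigenvalue λ satisfies the parabola equation (Im λ)² + n²(Re λ - E_n) = -c together with E_n ≤ Re λ ≤ E_n + (-c)/n²; moreover λ is real if and only if n²δ² = -c, in which case λ = E_n + (-c)/n² is the unique real point of this band and is its point of maximal real part. -/

import Mathlib

/-- For `c = cpcm < 0` and real `δ` with `n²δ² ≤ -c`, the eigenvalues of the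
near-resonant block are the complex conjugate pair `E_n + δ² ± i√(-c - n²δ²)`; each
eigenvalue `λ` lies on the parabola `(Im λ)² + n²(Re λ - E_n) = -c` with
`E_n ≤ Re λ ≤ E_n + (-c)/n²`, and `λ` is real iff `n²δ² = -c`, in which case
`λ = E_n + (-c)/n²`, the point of maximal real part of the band. -/
theorem band_for_negative_product (n : ℕ) (hn : 0 < n) (cp cm : ℝ) (hc : cp * cm < 0)
    (δ : ℝ) (hδ : (n : ℝ) ^ 2 * δ ^ 2 ≤ -(cp * cm)) :
    let En : ℝ := (n : ℝ) ^ 2 / 4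
    let P : Matrix (Fin 2) (Fin 2) ℂ :=
      !![((En + δ ^ 2 + (n : ℝ) * δ : ℝ) : ℂ), (cp : ℂ);
         (cm : ℂ), ((En + δ ^ 2 - (n : ℝ) * δ : ℝ) : ℂ)]
    let lamP : ℂ :=
      ((En + δ ^ 2 : ℝ) : ℂ) + Complex.I * (Real.sqrt (-(cp * cm) - (n : ℝ) ^ 2 * δ ^ 2) : ℂ)
    let lamM : ℂ :=
      ((En + δ ^ 2 : ℝ) : ℂ) - Complex.I * (Real.sqrt (-(cp * cm) - (n : ℝ) ^ 2 * δ ^ 2) : ℂ)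
    (∀ μ : ℂ, (∃ v : Fin 2 → ℂ, v ≠ 0 ∧ P.mulVec v = μ • v) ↔ (μ = lamP ∨ μ = lamM)) ∧
    lamM = starRingEnd ℂ lamP ∧
    (∀ μ : ℂ, (∃ v : Fin 2 → ℂ, v ≠ 0 ∧ P.mulVec v = μ • v) →
      μ.im ^ 2 + (n : ℝ) ^ 2 * (μ.re - En) = -(cp * cm) ∧
      En ≤ μ.re ∧ μ.re ≤ En + (-(cp * cm)) / (n : ℝ) ^ 2 ∧
      (μ.im = 0 ↔ (n : ℝ) ^ 2 * δ ^ 2 = -(cp * cm)) ∧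
      ((n : ℝ) ^ 2 * δ ^ 2 = -(cp * cm) →
        μ = ((En + (-(cp * cm)) / (n : ℝ) ^ 2 : ℝ) : ℂ))) := by
  intro En P lamP lamM
  set s : ℝ := Real.sqrt (-(cp * cm) - (n : ℝ) ^ 2 * δ ^ 2) with hs
  have hnR : (0:ℝ) < (n : ℝ) ^ 2 := by positivity
  have hsnn : (0:ℝ) ≤ -(cp * cm) - (n : ℝ) ^ 2 * δ ^ 2 := by linarith
  have hs0 : 0 ≤ s := Real.sqrt_nonneg _
  have hs2 : s ^ 2 = -(cp * cm) - (n : ℝ) ^ 2 * δ ^ 2 := Real.sq_sqrt hsnn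
  have hs2C : ((s : ℂ)) ^ 2 = -((cp:ℂ) * cm) - ((n:ℕ) : ℂ) ^ 2 * (δ:ℂ) ^ 2 := by
    exact_mod_cast congrArg Complex.ofReal hs2
  -- real and imaginary parts of lamP, lamM
  have hPre : lamP.re = En + δ ^ 2 := by
    simp [lamP, Complex.add_re, Complex.mul_re, ← Complex.ofReal_pow]
  have hPim : lamP.im = s := by
    simp [lamP, Complex.add_im, Complex.mul_im, ← Complex.ofReal_pow]
    exact hs.symm
  have hMre : lamM.re = En + δ ^ 2 := by
    simp [lamM, Complex.sub_re, Complex.mul_re, ← Complex.ofReal_pow]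
  have hMim : lamM.im = -s := by
    simp [lamM, Complex.sub_im, Complex.mul_im, ← Complex.ofReal_pow]
    exact hs.symm
  -- eigenvalue characterization
  have hev : ∀ μ : ℂ, (∃ v : Fin 2 → ℂ, v ≠ 0 ∧ P.mulVec v = μ • v) ↔ (μ = lamP ∨ μ = lamM) := by
    intro μ
    have h1 : (∃ v : Fin 2 → ℂ, v ≠ 0 ∧ P.mulVec v = μ • v) ↔ (P - μ • 1).det = 0 := by
      rw [← Matrix.exists_mulVec_eq_zero_iff]
      constructor
      · rintro ⟨v, hv, hPv⟩
        exact ⟨v, hv, by rw [Matrix.sub_mulVec, Matrix.smul_mulVec, Matrix.one_mulVec,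
          hPv, sub_self]⟩
      · rintro ⟨v, hv, hPv⟩
        refine ⟨v, hv, ?_⟩
        rw [Matrix.sub_mulVec, Matrix.smul_mulVec, Matrix.one_mulVec, sub_eq_zero] at hPv
        exact hPv
    have hdet : (P - μ • 1).det = (μ - lamP) * (μ - lamM) := by
      simp [Matrix.det_fin_two, P, lamP, lamM, ← hs]
      push_cast
      ring_nf
      linear_combination (s:ℂ)^2 * Complex.I_sq - hs2C
    rw [h1, hdet, mul_eq_zero, sub_eq_zero, sub_eq_zero]
  refine ⟨hev, ?_, ?_⟩
  · simp only [lamP, lamM, map_add, map_sub, map_mul, Complex.conj_I, Complex.conj_ofReal, ← hs]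
    ring
  · intro μ hμ
    have hre : μ.re = En + δ ^ 2 := by
      rcases (hev μ).1 hμ with h | h <;> rw [h] <;> [exact hPre; exact hMre]
    have him : μ.im = s ∨ μ.im = -s := by
      rcases (hev μ).1 hμ with h | h <;> rw [h] <;> [exact Or.inl hPim; exact Or.inr hMim]
    have him2 : μ.im ^ 2 = s ^ 2 := by rcases him with h | h <;> rw [h] <;> ring
    have hdle : δ ^ 2 ≤ -(cp * cm) / (n:ℝ) ^ 2 := by
      rw [le_div_iff₀ hnR]; linarith
    refine ⟨by rw [him2, hre]; linarith [hs2], by rw [hre]; nlinarith [sq_nonneg δ], ?_, ?_, ?_⟩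
    · rw [hre]; linarith [hdle]
    · constructor
      · intro h
        have hs0' : s = 0 := by rcases him with h' | h' <;> rw [h'] at h <;> linarith
        have : s ^ 2 = 0 := by rw [hs0']; ring
        rw [hs2] at this; linarith
      · intro h
        have : s ^ 2 = 0 := by rw [hs2]; linarith
        have hs0' : s = 0 := by nlinarith
        rcases him with h' | h' <;> rw [h', hs0'] <;> ring
    · intro h
      have h2 : s ^ 2 = 0 := by rw [hs2]; linarith
      have hs0' : s = 0 := by nlinarith
      have hsC : (s : ℂ) = 0 := by exact_mod_cast hs0'
      have hd2 : δ ^ 2 = -(cp * cm) / (n:ℝ) ^ 2 := by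
        field_simp; linarith
      have hμeq : μ = ((En + δ ^ 2 : ℝ) : ℂ) := by
        rcases (hev μ).1 hμ with h' | h' <;> rw [h'] <;>
          simp [lamP, lamM, ← hs, hsC]
      rw [hμeq, hd2]
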